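/- Let R = k[x, y, z]/(x^10 + y^10 + z^10) with k of characteristic p ∉ {0, 2, 5}, J = (x^5, y^7, z^8), u = x y^3 z^6, and J' = (x^5 + x u, y^7 + y u, z^8 + z u). Then x^5 z^2 ∈ J·(J : (J + (u))) but x^5 z^2 ∉ J'. -/

import Mathlib

open MvPolynomial in
set_option maxHeartbeats 2000000 in
/-- in `R = k[x,y,z]/(x^10+y^10+z^10)`, char `k = p ∉ {0,2,5}`, with
`J = (x^5, y^7, z^8)`, `u = x y³ z⁶`, `I = J + (u)` and
`J' = (x^5 + xu, y^7 + yu, z^8 + zu)`: `x^5 z² ∈ J·(J : I)` but `x^5 z² ∉ J'`. -/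
theorem stmt12 {k : Type*} [Field k] (p : ℕ) (hp : p.Prime) [CharP k p]
    (hp2 : p ≠ 2) (hp5 : p ≠ 5)
    {R : Type*} [CommRing R] (φ : MvPolynomial (Fin 3) k →+* R)
    (hsurj : Function.Surjective φ)
    (hker : RingHom.ker φ =
      Ideal.span {(X 0 : MvPolynomial (Fin 3) k) ^ 10 + X 1 ^ 10 + X 2 ^ 10})
    (J I J' : Ideal R) (u : R)
    (hJ : J = Ideal.span {φ (X 0) ^ 5, φ (X 1) ^ 7, φ (X 2) ^ 8})
    (hu : u = φ (X 0) * φ (X 1) ^ 3 * φ (X 2) ^ 6)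
    (hI : I = J ⊔ Ideal.span {u})
    (hJ' : J' = Ideal.span {φ (X 0) ^ 5 + φ (X 0) * u, φ (X 1) ^ 7 + φ (X 1) * u,
      φ (X 2) ^ 8 + φ (X 2) * u}) :
    φ (X 0) ^ 5 * φ (X 2) ^ 2 ∈ J * J.colon I ∧ φ (X 0) ^ 5 * φ (X 2) ^ 2 ∉ J' := by
  constructor
  · -- Part 1 : `x^5 z^2 = x^5 * z^2` with `x^5 ∈ J` and `z^2 ∈ (J : I)`.
    have hx5 : φ (X 0) ^ 5 ∈ J := hJ ▸ Ideal.subset_span (by simp)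
    have hz8 : φ (X 2) ^ 8 ∈ J := hJ ▸ Ideal.subset_span (by simp)
    have hz2 : φ (X 2) ^ 2 ∈ J.colon I := by
      rw [Submodule.mem_colon]
      intro r hr
      rw [hI] at hr
      obtain ⟨a, ha, b, hb, hab⟩ := Submodule.mem_sup.mp hr
      obtain ⟨c, hc⟩ := Ideal.mem_span_singleton'.mp hb
      rw [← hab, smul_eq_mul, mul_add]
      refine Ideal.add_mem _ (Ideal.mul_mem_left _ _ ha) ?_
      have : φ (X 2) ^ 2 * b = (c * (φ (X 0) * φ (X 1) ^ 3)) * φ (X 2) ^ 8 := by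
        rw [← hc, hu]; ring
      rw [this]
      exact Ideal.mul_mem_left _ _ hz8
    exact Ideal.mul_mem_mul hx5 hz2
  · -- Part 2 : non-membership, via an explicit "dual" certificate.
    intro hmem
    -- lift everything to the polynomial ring
    set G1 : MvPolynomial (Fin 3) k := X 0 ^ 5 + X 0 ^ 2 * X 1 ^ 3 * X 2 ^ 6 with hG1
    set G2 : MvPolynomial (Fin 3) k := X 1 ^ 7 + X 0 * X 1 ^ 4 * X 2 ^ 6 with hG2
    set G3 : MvPolynomial (Fin 3) k := X 2 ^ 8 + X 0 * X 1 ^ 3 * X 2 ^ 7 with hG3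
    set F : MvPolynomial (Fin 3) k := X 0 ^ 10 + X 1 ^ 10 + X 2 ^ 10 with hF
    have e1 : φ (X 0) ^ 5 + φ (X 0) * u = φ G1 := by
      simp only [hG1, map_add, map_mul, map_pow, hu]; ring
    have e2 : φ (X 1) ^ 7 + φ (X 1) * u = φ G2 := by
      simp only [hG2, map_add, map_mul, map_pow, hu]; ring
    have e3 : φ (X 2) ^ 8 + φ (X 2) * u = φ G3 := by
      simp only [hG3, map_add, map_mul, map_pow, hu]; ring
    have hspan : Ideal.span {φ G1, φ G2, φ G3} =
        Ideal.map φ (Ideal.span {G1, G2, G3}) := by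
      rw [Ideal.map_span, Set.image_insert_eq, Set.image_insert_eq, Set.image_singleton]
    rw [hJ', e1, e2, e3, hspan] at hmem
    obtain ⟨Q, hQ, hφQ⟩ := Ideal.mem_image_of_mem_map_of_surjective φ hsurj hmem
    have hker' : (X 0 ^ 5 * X 2 ^ 2 : MvPolynomial (Fin 3) k) - Q ∈ RingHom.ker φ := by
      rw [RingHom.mem_ker, map_sub, map_mul, map_pow, map_pow, hφQ, sub_self]
    rw [hker] at hker'
    -- so `x^5 z^2 ∈ (G1, G2, G3, F)` in the polynomial ring
    have hP : (X 0 ^ 5 * X 2 ^ 2 : MvPolynomial (Fin 3) k) ∈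
        Ideal.span {G1, G2, G3, F} := by
      have hsub1 : ({G1, G2, G3} : Set (MvPolynomial (Fin 3) k)) ⊆ {G1, G2, G3, F} := by
        intro a ha
        simp only [Set.mem_insert_iff, Set.mem_singleton_iff] at ha ⊢
        rcases ha with h | h | h
        exacts [Or.inl h, Or.inr (Or.inl h), Or.inr (Or.inr (Or.inl h))]
      have hsub2 : ({F} : Set (MvPolynomial (Fin 3) k)) ⊆ {G1, G2, G3, F} := by
        intro a ha
        simp only [Set.mem_insert_iff, Set.mem_singleton_iff] at ha ⊢
        exact Or.inr (Or.inr (Or.inr ha))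
      have h1 : Q ∈ Ideal.span {G1, G2, G3, F} := Ideal.span_mono hsub1 hQ
      have h2 : (X 0 ^ 5 * X 2 ^ 2 : MvPolynomial (Fin 3) k) - Q ∈
          Ideal.span {G1, G2, G3, F} := by
        rw [hF]; exact Ideal.span_mono hsub2 hker'
      have := Ideal.add_mem _ h1 h2
      simpa using this
    -- the certificate polynomial
    set L : MvPolynomial (Fin 3) k :=
      X 0 ^ 6 * X 1 ^ 3 * X 2 ^ 2 + X 0 ^ 4 * X 1 ^ 9 * X 2 ^ 7 + X 0 ^ 8 * X 1 ^ 9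
        - X 0 ^ 3 * X 1 ^ 6 * X 2 ^ 8 - X 0 ^ 7 * X 2 ^ 8 - X 0 ^ 7 * X 1 ^ 6 * X 2 with hL
    set M' : Ideal (MvPolynomial (Fin 3) k) := Ideal.span {X 0 ^ 10, X 1 ^ 10, X 2 ^ 10}
      with hM'
    have m0 : (X 0 ^ 10 : MvPolynomial (Fin 3) k) ∈ M' := Ideal.subset_span (by simp)
    have m1 : (X 1 ^ 10 : MvPolynomial (Fin 3) k) ∈ M' := Ideal.subset_span (by simp)
    have m2 : (X 2 ^ 10 : MvPolynomial (Fin 3) k) ∈ M' := Ideal.subset_span (by simp)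
    have hg1 : G1 * L ∈ M' := by
      have : G1 * L =
          X 0 ^ 10 * (X 0 * X 1 ^ 3 * X 2 ^ 2 - X 0 ^ 2 * X 2 ^ 8
            - X 0 ^ 2 * X 1 ^ 6 * X 2 + X 0 ^ 3 * X 1 ^ 9 + X 1 ^ 12 * X 2 ^ 6)
          + X 1 ^ 10 * (X 0 ^ 6 * X 1 ^ 2 * X 2 ^ 13)
          + X 2 ^ 10 * (-(X 0 ^ 5 * X 1 ^ 9 * X 2 ^ 4) - X 0 ^ 9 * X 1 ^ 3 * X 2 ^ 4) := by
        rw [hG1, hL]; ring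
      rw [this]
      exact Ideal.add_mem _ (Ideal.add_mem _ (Ideal.mul_mem_right _ _ m0)
        (Ideal.mul_mem_right _ _ m1)) (Ideal.mul_mem_right _ _ m2)
    have hg2 : G2 * L ∈ M' := by
      have : G2 * L =
          X 1 ^ 10 * (-(X 0 ^ 3 * X 1 ^ 3 * X 2 ^ 8) - X 0 ^ 4 * X 2 ^ 14
            + X 0 ^ 4 * X 1 ^ 6 * X 2 ^ 7 + X 0 ^ 5 * X 1 ^ 3 * X 2 ^ 13
            + X 0 ^ 6 * X 2 ^ 2 - X 0 ^ 7 * X 1 ^ 3 * X 2 - X 0 ^ 8 * X 2 ^ 7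
            + X 0 ^ 8 * X 1 ^ 6 + X 0 ^ 9 * X 1 ^ 3 * X 2 ^ 6)
          + X 2 ^ 10 * (-(X 0 ^ 8 * X 1 ^ 4 * X 2 ^ 4)) := by
        rw [hG2, hL]; ring
      rw [this]
      exact Ideal.add_mem _ (Ideal.mul_mem_right _ _ m1) (Ideal.mul_mem_right _ _ m2)
    have hg3 : G3 * L ∈ M' := by
      have : G3 * L =
          X 1 ^ 10 * (X 0 ^ 5 * X 1 ^ 2 * X 2 ^ 14 + X 0 ^ 9 * X 1 ^ 2 * X 2 ^ 7)
          + X 2 ^ 10 * (-(X 0 ^ 3 * X 1 ^ 6 * X 2 ^ 6) + X 0 ^ 6 * X 1 ^ 3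
            - X 0 ^ 7 * X 2 ^ 6 - X 0 ^ 8 * X 1 ^ 3 * X 2 ^ 5) := by
        rw [hG3, hL]; ring
      rw [this]
      exact Ideal.add_mem _ (Ideal.mul_mem_right _ _ m1) (Ideal.mul_mem_right _ _ m2)
    have hg4 : F * L ∈ M' := by
      have : F * L = X 0 ^ 10 * L + X 1 ^ 10 * L + X 2 ^ 10 * L := by rw [hF]; ring
      rw [this]
      exact Ideal.add_mem _ (Ideal.add_mem _ (Ideal.mul_mem_right _ _ m0)
        (Ideal.mul_mem_right _ _ m1)) (Ideal.mul_mem_right _ _ m2)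
    have hcolon : Ideal.span {G1, G2, G3, F} ≤ M'.colon (Ideal.span {L}) := by
      rw [Ideal.span_le]
      intro g hg
      simp only [Set.mem_insert_iff, Set.mem_singleton_iff] at hg
      rw [SetLike.mem_coe, Ideal.mem_colon_span_singleton]
      rcases hg with rfl | rfl | rfl | rfl
      exacts [hg1, hg2, hg3, hg4]
    have hPL : (X 0 ^ 5 * X 2 ^ 2 : MvPolynomial (Fin 3) k) * L ∈ M' :=
      Ideal.mem_colon_span_singleton.mp (hcolon hP)
    -- extract a representation and look at the coefficient of x^9 y^9 z^9
    rw [hM'] at hPL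
    obtain ⟨a, w1, hw1, hrep⟩ := Ideal.mem_span_insert.mp hPL
    obtain ⟨b, w2, hw2, hrep2⟩ := Ideal.mem_span_insert.mp hw1
    obtain ⟨c, hc⟩ := Ideal.mem_span_singleton'.mp hw2
    set mm : Fin 3 →₀ ℕ := Finsupp.single 0 9 + Finsupp.single 1 9 + Finsupp.single 2 9
      with hmm
    have hle : ∀ i : Fin 3, ¬ Finsupp.single i 10 ≤ mm := by
      intro i h
      have h' := h i
      fin_cases i <;>
        simp [hmm, Finsupp.single_apply, Finsupp.add_apply] at h'
    have c0 : ∀ q : MvPolynomial (Fin 3) k, coeff mm (q * X 0 ^ 10) = 0 := by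
      intro q
      rw [X_pow_eq_monomial, coeff_mul_monomial', if_neg (hle 0)]
    have c1 : ∀ q : MvPolynomial (Fin 3) k, coeff mm (q * X 1 ^ 10) = 0 := by
      intro q
      rw [X_pow_eq_monomial, coeff_mul_monomial', if_neg (hle 1)]
    have c2 : ∀ q : MvPolynomial (Fin 3) k, coeff mm (q * X 2 ^ 10) = 0 := by
      intro q
      rw [X_pow_eq_monomial, coeff_mul_monomial', if_neg (hle 2)]
    have cm : coeff mm (X 0 ^ 9 * X 1 ^ 9 * X 2 ^ 9 : MvPolynomial (Fin 3) k) = 1 := by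
      rw [X_pow_eq_monomial, X_pow_eq_monomial, X_pow_eq_monomial, monomial_mul,
        monomial_mul, coeff_monomial, if_pos rfl]
      norm_num
    have lhs1 : coeff mm ((X 0 ^ 5 * X 2 ^ 2 : MvPolynomial (Fin 3) k) * L) = 1 := by
      have hexp : (X 0 ^ 5 * X 2 ^ 2 : MvPolynomial (Fin 3) k) * L =
          X 0 ^ 9 * X 1 ^ 9 * X 2 ^ 9
          + ((X 0 * X 1 ^ 3 * X 2 ^ 4 - X 0 ^ 2 * X 2 ^ 10 - X 0 ^ 2 * X 1 ^ 6 * X 2 ^ 3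
              + X 0 ^ 3 * X 1 ^ 9 * X 2 ^ 2) * X 0 ^ 10
            + (-(X 0 ^ 8 * X 1 ^ 6)) * X 2 ^ 10) := by
        rw [hL]; ring
      rw [hexp, coeff_add, coeff_add, cm, c0, c2]
      norm_num
    have heq : (X 0 ^ 5 * X 2 ^ 2 : MvPolynomial (Fin 3) k) * L =
        a * X 0 ^ 10 + (b * X 1 ^ 10 + c * X 2 ^ 10) := by
      rw [hrep, hrep2, hc]
    have := congrArg (coeff mm) heq
    rw [lhs1, coeff_add, coeff_add, c0, c1, c2] at this
    norm_num at this
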